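/- arXiv:quant-ph/0302136 — 3 statements merged into one kernel-verified Lean document; each statement's English description precedes it below -/
import Mathlib

section
/- (Risk-neutral verification inequality.) Let Γ be a controlled transfer operator, L a cost function, N a positive semidefinite Hermitian matrix, and M ≥ 1 a horizon. Suppose V assigns a real number V(ω,k) to each positive semidefinite matrix ω and each time 0 ≤ k ≤ M, and satisfies the dynamic programming equation: V(ω,M) = ⟨ω, N⟩ for all ω, and for all 0 ≤ k ≤ M−1 and all positive semidefinite ω, V(ω,k) = inf_{u∈U} { ⟨ω, L(u)⟩ + ∑_{y∈Y} V(Λ_Γ(u,y)ω, k+1) · p(y|u,ω) }. Then for every 0 ≤ k ≤ M, every normalized state ω, and every feedback controller K on the interval [k, M−1], V(ω,k) ≤ J_{ω,k}(K). -/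
open Matrix BigOperators
open scoped ComplexOrder

noncomputable section

/-- Complex `n × n` matrices. -/
abbrev Mat (n : ℕ) := Matrix (Fin n) (Fin n) ℂ

/-- Real part of the trace. -/
def trR {n : ℕ} (A : Mat n) : ℝ := A.trace.re

/-- The probability `p(y|u,ω) = tr(Γ(u,y)ω)`. -/
def pDist {n : ℕ} {U Y : Type*} (Γ : U → Y → Mat n →ₗ[ℂ] Mat n)
    (u : U) (y : Y) (ω : Mat n) : ℝ := trR (Γ u y ω)

/-- The conditional state `Λ_Γ(u,y)ω = Γ(u,y)ω / p(y|u,ω)` (equal to `0` when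
`p(y|u,ω) = 0`). -/
def lamState {n : ℕ} {U Y : Type*} (Γ : U → Y → Mat n →ₗ[ℂ] Mat n)
    (u : U) (y : Y) (ω : Mat n) : Mat n := (pDist Γ u y ω)⁻¹ • Γ u y ω

/-- `∏_{i} p(y_{i+1}|u_i,ω_i)` along the measurement record `ys`, where the controller
`K` (a function of the accumulated record) chooses the controls and the state evolves
by `ω_{i+1} = Λ_Γ(u_i,y_{i+1}) ω_i`.  `rec` is the record accumulated so far. -/
def prodP {n : ℕ} {U Y : Type*} (Γ : U → Y → Mat n →ₗ[ℂ] Mat n)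
    (K : List Y → U) : Mat n → List Y → List Y → ℝ
  | _, _, [] => 1
  | ω, rec, y :: ys =>
      pDist Γ (K rec) y ω * prodP Γ K (lamState Γ (K rec) y ω) (rec ++ [y]) ys

/-- `∑_i ⟨ω_i, L(u_i)⟩ + ⟨ω_M, N⟩` along the measurement record `ys`. -/
def sumCost {n : ℕ} {U Y : Type*} (Γ : U → Y → Mat n →ₗ[ℂ] Mat n)
    (L : U → Mat n) (N : Mat n) (K : List Y → U) :
    Mat n → List Y → List Y → ℝ
  | ω, _, [] => trR (N * ω)
  | ω, rec, y :: ys =>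
      trR (L (K rec) * ω) + sumCost Γ L N K (lamState Γ (K rec) y ω) (rec ++ [y]) ys

/-- The risk-neutral cost-to-go with `m` remaining steps:
`J_{ω}(K) = ∑_{y-sequences} (∏ p) · (∑ running costs + terminal cost)`. -/
def Jrn {n : ℕ} {U Y : Type*} [Fintype Y] (Γ : U → Y → Mat n →ₗ[ℂ] Mat n)
    (L : U → Mat n) (N : Mat n) (m : ℕ) (K : List Y → U) (ω : Mat n) : ℝ :=
  ∑ ys : Fin m → Y,
    prodP Γ K ω [] (List.ofFn ys) * sumCost Γ L N K ω [] (List.ofFn ys)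


set_option linter.unusedSectionVars false

lemma trace_nonneg' {n : ℕ} {A : Mat n} (hA : A.PosSemidef) : 0 ≤ A.trace := by
  rw [Matrix.trace]
  apply Finset.sum_nonneg
  intro i _
  have h := hA.dotProduct_mulVec_nonneg (Pi.single i 1)
  simpa [dotProduct, Matrix.mulVec, Pi.single_apply, Matrix.diag] using h

lemma trace_eq_trR {n : ℕ} {A : Mat n} (hA : A.PosSemidef) : A.trace = (trR A : ℂ) := by
  have h := trace_nonneg' hA
  rw [Complex.le_def] at h
  apply Complex.ext <;> simp [trR, ← h.2]

lemma trR_nonneg {n : ℕ} {A : Mat n} (hA : A.PosSemidef) : 0 ≤ trR A := by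
  have h := trace_nonneg' hA
  rw [Complex.le_def] at h
  simpa [trR] using h.1

lemma psd_smul_real {n : ℕ} {A : Mat n} (hA : A.PosSemidef) {r : ℝ} (hr : 0 ≤ r) :
    (r • A).PosSemidef := by
  rw [Matrix.posSemidef_iff_dotProduct_mulVec]
  constructor
  · show (r • A)ᴴ = r • A
    rw [Matrix.conjTranspose_smul, hA.1.eq]; norm_num
  · intro x
    have h := hA.dotProduct_mulVec_nonneg x
    have : star x ⬝ᵥ (r • A) *ᵥ x = (r : ℂ) * (star x ⬝ᵥ A *ᵥ x) := by
      simp [Matrix.smul_mulVec, dotProduct_smul, Complex.real_smul]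
    rw [this]
    exact mul_nonneg (by simpa using Complex.zero_le_real.2 hr) h

section Aux
variable {n : ℕ} {U Y : Type*} [Fintype U] [Nonempty U] [Fintype Y] [Nonempty Y]
  (Γ : U → Y → Mat n →ₗ[ℂ] Mat n)
  (hPSD : ∀ (u : U) (y : Y) (ω : Mat n), ω.PosSemidef → (Γ u y ω).PosSemidef)
  (hNorm : ∀ (u : U) (ω : Mat n), ∑ y : Y, (Γ u y ω).trace = ω.trace)

include hPSD in
lemma pDist_nonneg {u y} {ω : Mat n} (hω : ω.PosSemidef) : 0 ≤ pDist Γ u y ω :=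
  trR_nonneg (hPSD u y ω hω)

include hPSD in
lemma lam_psd {u y} {ω : Mat n} (hω : ω.PosSemidef) : (lamState Γ u y ω).PosSemidef :=
  psd_smul_real (hPSD u y ω hω) (inv_nonneg.2 (pDist_nonneg Γ hPSD hω))

include hPSD in
lemma lam_trace {u y} {ω : Mat n} (hω : ω.PosSemidef) (hp : pDist Γ u y ω ≠ 0) :
    (lamState Γ u y ω).trace = 1 := by
  rw [lamState, Matrix.trace_smul, trace_eq_trR (hPSD u y ω hω)]
  show ((pDist Γ u y ω)⁻¹ : ℝ) • ((pDist Γ u y ω : ℝ) : ℂ) = 1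
  rw [Complex.real_smul, ← Complex.ofReal_mul, inv_mul_cancel₀ hp]
  norm_num

include hNorm in
lemma sum_pDist {u} {ω : Mat n} (htr : ω.trace = 1) : ∑ y : Y, pDist Γ u y ω = 1 := by
  have := congrArg Complex.re (hNorm u ω)
  simpa [htr, Complex.re_sum, pDist, trR] using this

include hPSD hNorm in
lemma sum_prodP_eq_one (K : List Y → U) :
    ∀ (m : ℕ) (rec : List Y) (ω : Mat n), ω.PosSemidef → ω.trace = 1 →
      ∑ ys : Fin m → Y, prodP Γ K ω rec (List.ofFn ys) = 1 := by
  intro m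
  induction m with
  | zero => intro rec ω _ _; simp [prodP]
  | succ m ih =>
    intro rec ω hω htr
    rw [← (Fin.consEquiv (fun _ : Fin (m+1) => Y)).sum_comp]
    rw [Fintype.sum_prod_type]
    have step : ∀ y : Y, ∑ ys : Fin m → Y,
        prodP Γ K ω rec (List.ofFn ((Fin.consEquiv fun _ => Y) (y, ys))) = pDist Γ (K rec) y ω := by
      intro y
      have h1 : ∀ ys : Fin m → Y,
          prodP Γ K ω rec (List.ofFn ((Fin.consEquiv fun _ => Y) (y, ys)))
          = pDist Γ (K rec) y ω * prodP Γ K (lamState Γ (K rec) y ω) (rec ++ [y]) (List.ofFn ys) := by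
        intro ys
        simp [Fin.consEquiv, List.ofFn_succ, prodP]
      rw [Finset.sum_congr rfl (fun ys _ => h1 ys), ← Finset.mul_sum]
      by_cases hp : pDist Γ (K rec) y ω = 0
      · simp [hp]
      · rw [ih (rec ++ [y]) _ (lam_psd Γ hPSD hω) (lam_trace Γ hPSD hω hp), mul_one]
    rw [Finset.sum_congr rfl (fun y _ => step y)]
    exact sum_pDist Γ hNorm htr

include hPSD hNorm in
lemma main_aux (L : U → Mat n) (N : Mat n) (M : ℕ)
    (V : Mat n → ℕ → ℝ)
    (hVM : ∀ ω : Mat n, V ω M = trR (N * ω))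
    (hVk : ∀ k < M, ∀ ω : Mat n, ω.PosSemidef →
      V ω k = ⨅ u : U, (trR (L u * ω) + ∑ y : Y, V (lamState Γ u y ω) (k + 1) * pDist Γ u y ω))
    (K : List Y → U) :
    ∀ (m : ℕ), m ≤ M → ∀ (rec : List Y) (ω : Mat n), ω.PosSemidef → ω.trace = 1 →
      V ω (M - m) ≤ ∑ ys : Fin m → Y,
        prodP Γ K ω rec (List.ofFn ys) * sumCost Γ L N K ω rec (List.ofFn ys) := by
  intro m
  induction m with
  | zero => intro _ rec ω hω htr; simp [prodP, sumCost, hVM]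
  | succ m ih =>
    intro hm rec ω hω htr
    have hk : M - (m+1) < M := by omega
    have hk1 : M - (m+1) + 1 = M - m := by omega
    set u := K rec with hu
    set c := trR (L u * ω) with hc
    have hinf : V ω (M - (m+1)) ≤ c + ∑ y : Y, V (lamState Γ u y ω) (M - m) * pDist Γ u y ω := by
      rw [hVk _ hk ω hω]
      have h2 := ciInf_le (f := fun u : U =>
        (trR (L u * ω) + ∑ y : Y, V (lamState Γ u y ω) (M - (m+1) + 1) * pDist Γ u y ω))
        (Set.Finite.bddBelow (Set.finite_range _)) u
      simpa [hk1] using h2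
    refine hinf.trans ?_
    rw [← (Fin.consEquiv (fun _ : Fin (m+1) => Y)).sum_comp, Fintype.sum_prod_type]
    have expand : ∀ (y : Y) (ys : Fin m → Y),
        prodP Γ K ω rec (List.ofFn ((Fin.consEquiv fun _ => Y) (y, ys))) *
        sumCost Γ L N K ω rec (List.ofFn ((Fin.consEquiv fun _ => Y) (y, ys))) =
        pDist Γ u y ω * (prodP Γ K (lamState Γ u y ω) (rec ++ [y]) (List.ofFn ys) *
          (c + sumCost Γ L N K (lamState Γ u y ω) (rec ++ [y]) (List.ofFn ys))) := by
      intro y ys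
      simp only [Fin.consEquiv, Equiv.coe_fn_mk, List.ofFn_succ, Fin.cons_zero, Fin.cons_succ,
        prodP, sumCost, ← hu, ← hc]
      ring
    have hy : ∀ y : Y, pDist Γ u y ω * c + V (lamState Γ u y ω) (M - m) * pDist Γ u y ω ≤
        ∑ ys : Fin m → Y, pDist Γ u y ω *
          (prodP Γ K (lamState Γ u y ω) (rec ++ [y]) (List.ofFn ys) *
          (c + sumCost Γ L N K (lamState Γ u y ω) (rec ++ [y]) (List.ofFn ys))) := by
      intro y
      by_cases hp : pDist Γ u y ω = 0
      · simp [hp]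
      have hpos : 0 < pDist Γ u y ω := lt_of_le_of_ne (pDist_nonneg Γ hPSD hω) (Ne.symm hp)
      have hΛ := lam_psd Γ hPSD (u := u) (y := y) hω
      have hΛtr := lam_trace Γ hPSD (u := u) (y := y) hω hp
      rw [← Finset.mul_sum]
      have hS : ∑ ys : Fin m → Y,
          prodP Γ K (lamState Γ u y ω) (rec ++ [y]) (List.ofFn ys) *
          (c + sumCost Γ L N K (lamState Γ u y ω) (rec ++ [y]) (List.ofFn ys)) =
          c + ∑ ys : Fin m → Y,
            prodP Γ K (lamState Γ u y ω) (rec ++ [y]) (List.ofFn ys) *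
            sumCost Γ L N K (lamState Γ u y ω) (rec ++ [y]) (List.ofFn ys) := by
        have : ∀ ys : Fin m → Y,
            prodP Γ K (lamState Γ u y ω) (rec ++ [y]) (List.ofFn ys) *
            (c + sumCost Γ L N K (lamState Γ u y ω) (rec ++ [y]) (List.ofFn ys)) =
            prodP Γ K (lamState Γ u y ω) (rec ++ [y]) (List.ofFn ys) * c +
            prodP Γ K (lamState Γ u y ω) (rec ++ [y]) (List.ofFn ys) *
            sumCost Γ L N K (lamState Γ u y ω) (rec ++ [y]) (List.ofFn ys) := fun ys => by ring
        rw [Finset.sum_congr rfl (fun ys _ => this ys), Finset.sum_add_distrib,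
          ← Finset.sum_mul, sum_prodP_eq_one Γ hPSD hNorm K m (rec ++ [y]) _ hΛ hΛtr, one_mul]
      rw [hS, mul_add]
      have hG := ih (by omega) (rec ++ [y]) (lamState Γ u y ω) hΛ hΛtr
      calc pDist Γ u y ω * c + V (lamState Γ u y ω) (M - m) * pDist Γ u y ω
          ≤ pDist Γ u y ω * c + (∑ ys : Fin m → Y,
            prodP Γ K (lamState Γ u y ω) (rec ++ [y]) (List.ofFn ys) *
            sumCost Γ L N K (lamState Γ u y ω) (rec ++ [y]) (List.ofFn ys)) * pDist Γ u y ω := by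
            gcongr
        _ = _ := by ring
    calc c + ∑ y : Y, V (lamState Γ u y ω) (M - m) * pDist Γ u y ω
        = ∑ y : Y, (pDist Γ u y ω * c + V (lamState Γ u y ω) (M - m) * pDist Γ u y ω) := by
          rw [Finset.sum_add_distrib, ← Finset.sum_mul, sum_pDist Γ hNorm htr, one_mul]
      _ ≤ _ := by
          rw [Finset.sum_congr rfl (fun y _ => Finset.sum_congr rfl (fun ys _ => expand y ys))]
          exact Finset.sum_le_sum (fun y _ => hy y)
end Aux

/-- risk-neutral verification inequality.  If `V` satisfies the
risk-neutral dynamic programming equation, then `V(ω,k) ≤ J_{ω,k}(K)` for every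
normalized state `ω` and every feedback controller `K` on `[k, M−1]`. -/
theorem riskNeutral_verification
    {n : ℕ} {U Y : Type*} [Fintype U] [Nonempty U] [Fintype Y] [Nonempty Y]
    (Γ : U → Y → Mat n →ₗ[ℂ] Mat n)
    (hPSD : ∀ (u : U) (y : Y) (ω : Mat n), ω.PosSemidef → (Γ u y ω).PosSemidef)
    (hNorm : ∀ (u : U) (ω : Mat n), ∑ y : Y, (Γ u y ω).trace = ω.trace)
    (L : U → Mat n) (hL : ∀ u, (L u).PosSemidef)
    (N : Mat n) (hN : N.PosSemidef)
    (M : ℕ) (hM : 1 ≤ M)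
    (V : Mat n → ℕ → ℝ)
    (hVM : ∀ ω : Mat n, V ω M = trR (N * ω))
    (hVk : ∀ k < M, ∀ ω : Mat n, ω.PosSemidef →
      V ω k = ⨅ u : U,
        (trR (L u * ω) + ∑ y : Y, V (lamState Γ u y ω) (k + 1) * pDist Γ u y ω)) :
    ∀ k ≤ M, ∀ ω : Mat n, ω.PosSemidef → ω.trace = 1 →
      ∀ K : List Y → U, V ω k ≤ Jrn Γ L N (M - k) K ω := by
  intro k hk ω hω htr K
  have h := main_aux Γ hPSD hNorm L N M V hVM hVk K (M - k) (by omega) [] ω hω htr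
  rw [show M - (M - k) = k by omega] at h
  simpa [Jrn] using h
end
end

section
/- (Theorem 1(ii): optimality of the risk-sensitive separation controller.) Let Γ, R, F, M be as in the risk-sensitive setting and let W satisfy the risk-sensitive dynamic programming equation (W(ω̂,M) = ⟨ω̂,F⟩; W(ω̂,k) = inf_{u∈U} ∑_{y∈Y} W(Λ_{Γ,R}(u,y)ω̂, k+1) p_R(y|u,ω̂) for 0 ≤ k ≤ M−1). Suppose moreover that for every positive semidefinite ω̂ and every 0 ≤ k ≤ M−1 there is a control û*(ω̂,k) ∈ U attaining the infimum. Fix a positive semidefinite initial matrix ω̂₀ and define the separation controller K̂* by u_k = û*(ω̂_k,k), where ω̂_{k+1} = Λ_{Γ,R}(u_k, y_{k+1}) ω̂_k. Then J^μ_{ω̂₀,0}(K̂*) = W(ω̂₀,0), and consequently J^μ_{ω̂₀,0}(K̂*) ≤ J^μ_{ω̂₀,0}(K) for every feedback controller K. -/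
open Matrix BigOperators
open scoped ComplexOrder

noncomputable section

/-- `p_R(y|u,ωh) = tr(Γ(u,y)(R(u)ωh)) / tr(R(u)ωh)` (equal to `0` when the
denominator vanishes, by the junk-value convention of real division). -/
def pR {n : ℕ} {U Y : Type*} (Γ : U → Y → Mat n →ₗ[ℂ] Mat n)
    (R : U → Mat n → Mat n) (u : U) (y : Y) (ωh : Mat n) : ℝ :=
  trR (Γ u y (R u ωh)) / trR (R u ωh)

/-- The unnormalized conditional state
`Λ_{Γ,R}(u,y)ωh = Γ_R(u,y)ωh / p_R(y|u,ωh)` (equal to `0` when `p_R(y|u,ωh) = 0`). -/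
def lamR {n : ℕ} {U Y : Type*} (Γ : U → Y → Mat n →ₗ[ℂ] Mat n)
    (R : U → Mat n → Mat n) (u : U) (y : Y) (ωh : Mat n) : Mat n :=
  (pR Γ R u y ωh)⁻¹ • Γ u y (R u ωh)

/-- The cost functional `G`: `G(ωh) = tr(F ωh)` when no outcomes remain, and otherwise
`G_j(ωh) = G_{j+1}(Γ(u_j,y_{j+1}) R(u_j) ωh)`, with controls `u_j = K(record so far)`. -/
def Gcost {n : ℕ} {U Y : Type*} (Γ : U → Y → Mat n →ₗ[ℂ] Mat n)
    (R : U → Mat n → Mat n) (F : Mat n) (K : List Y → U) :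
    List Y → Mat n → List Y → ℝ
  | _, ωh, [] => trR (F * ωh)
  | rec, ωh, y :: ys =>
      Gcost Γ R F K (rec ++ [y]) (Γ (K rec) y (R (K rec) ωh)) ys

/-- `∏_k p_R(y_{k+1}|u_k, ωh_k)` along the record `ys`, with the unnormalized
conditional dynamics `ωh_{k+1} = Λ_{Γ,R}(u_k,y_{k+1}) ωh_k`. -/
def prodPR {n : ℕ} {U Y : Type*} (Γ : U → Y → Mat n →ₗ[ℂ] Mat n)
    (R : U → Mat n → Mat n) (K : List Y → U) : Mat n → List Y → List Y → ℝ
  | _, _, [] => 1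
  | ωh, rec, y :: ys =>
      pR Γ R (K rec) y ωh * prodPR Γ R K (lamR Γ R (K rec) y ωh) (rec ++ [y]) ys

/-- The terminal state of the unnormalized conditional dynamics
`ωh_{k+1} = Λ_{Γ,R}(u_k,y_{k+1}) ωh_k` along the record `ys`. -/
def trajR {n : ℕ} {U Y : Type*} (Γ : U → Y → Mat n →ₗ[ℂ] Mat n)
    (R : U → Mat n → Mat n) (K : List Y → U) : Mat n → List Y → List Y → Mat n
  | ωh, _, [] => ωh
  | ωh, rec, y :: ys => trajR Γ R K (lamR Γ R (K rec) y ωh) (rec ++ [y]) ys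

/-- The state trajectory of the risk-sensitive separation controller: starting from
`ωh` at time `k`, follow the outcomes `ys`, applying at each step the control
`ustar(current unnormalized state, time)`. -/
def sepEvolveR {n : ℕ} {U Y : Type*} (Γ : U → Y → Mat n →ₗ[ℂ] Mat n)
    (R : U → Mat n → Mat n) (ustar : Mat n → ℕ → U) : Mat n → ℕ → List Y → Mat n
  | ωh, _, [] => ωh
  | ωh, k, y :: ys =>
      sepEvolveR Γ R ustar (lamR Γ R (ustar ωh k) y ωh) (k + 1) ys

/-- The risk-sensitive separation controller `K̂*` determined by `ustar` and the initial
state `ωh₀`. -/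
def sepControllerR {n : ℕ} {U Y : Type*} (Γ : U → Y → Mat n →ₗ[ℂ] Mat n)
    (R : U → Mat n → Mat n) (ustar : Mat n → ℕ → U) (ωh₀ : Mat n)
    (rec : List Y) : U :=
  ustar (sepEvolveR Γ R ustar ωh₀ 0 rec) rec.length

section Aux

variable {n : ℕ} {U Y : Type*}

lemma trR_smul (r : ℝ) (A : Mat n) : trR (r • A) = r * trR A := by
  simp [trR, Matrix.trace_smul, Complex.real_smul]

lemma trR_psd {A : Mat n} (h : A.PosSemidef) :
    0 ≤ trR A ∧ (trR A = 0 → A = 0) := by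
  obtain ⟨B, rfl⟩ : ∃ B : Mat n, A = Bᴴ * B := by
    open scoped MatrixOrder in exact CStarAlgebra.nonneg_iff_eq_star_mul_self.mp h.nonneg
  have htr : trR (Bᴴ * B) = ∑ j, ∑ i, Complex.normSq (B i j) := by
    simp only [trR, Matrix.trace, Matrix.diag, Matrix.mul_apply,
      Matrix.conjTranspose_apply]
    rw [Complex.re_sum]
    refine Finset.sum_congr rfl fun j _ => ?_
    rw [Complex.re_sum]
    refine Finset.sum_congr rfl fun i _ => ?_
    rw [Complex.star_def, mul_comm, Complex.mul_conj]
    simp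
  constructor
  · rw [htr]
    exact Finset.sum_nonneg fun j _ => Finset.sum_nonneg fun i _ =>
      Complex.normSq_nonneg _
  · intro h0
    rw [htr] at h0
    have hB : B = 0 := by
      ext i j
      have h1 := (Finset.sum_eq_zero_iff_of_nonneg (fun j _ => Finset.sum_nonneg
        (fun i _ => Complex.normSq_nonneg _))).mp h0 j (Finset.mem_univ _)
      have h2 := (Finset.sum_eq_zero_iff_of_nonneg (fun i _ =>
        Complex.normSq_nonneg _)).mp h1 i (Finset.mem_univ _)
      simpa using Complex.normSq_eq_zero.mp h2
    rw [hB]; simp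

lemma pR_nonneg (Γ : U → Y → Mat n →ₗ[ℂ] Mat n)
    (hPSD : ∀ (u : U) (y : Y) (ω : Mat n), ω.PosSemidef → (Γ u y ω).PosSemidef)
    (R : U → Mat n → Mat n)
    (hRPSD : ∀ (u : U) (ωh : Mat n), ωh.PosSemidef → (R u ωh).PosSemidef)
    (u : U) (y : Y) {ωh : Mat n} (h : ωh.PosSemidef) : 0 ≤ pR Γ R u y ωh :=
  div_nonneg (trR_psd (hPSD u y _ (hRPSD u ωh h))).1 (trR_psd (hRPSD u ωh h)).1

lemma psd_real_smul {A : Mat n} (h : A.PosSemidef) {c : ℝ} (hc : 0 ≤ c) :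
    (c • A).PosSemidef := by
  have hE : c • A = ((c : ℂ)) • A := by
    ext i j; simp [Matrix.smul_apply, Complex.real_smul]
  rw [hE]
  constructor
  · rw [Matrix.IsHermitian, Matrix.conjTranspose_smul, h.1.eq, Complex.star_def,
      Complex.conj_ofReal]
  · intro x
    exact (h.smul (Complex.zero_le_real.mpr hc)).2 x

lemma lamR_psd (Γ : U → Y → Mat n →ₗ[ℂ] Mat n)
    (hPSD : ∀ (u : U) (y : Y) (ω : Mat n), ω.PosSemidef → (Γ u y ω).PosSemidef)
    (R : U → Mat n → Mat n)
    (hRPSD : ∀ (u : U) (ωh : Mat n), ωh.PosSemidef → (R u ωh).PosSemidef)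
    (u : U) (y : Y) {ωh : Mat n} (h : ωh.PosSemidef) :
    (lamR Γ R u y ωh).PosSemidef := by
  have hX : (Γ u y (R u ωh)).PosSemidef := hPSD u y _ (hRPSD u ωh h)
  have hc : (0:ℝ) ≤ (pR Γ R u y ωh)⁻¹ := inv_nonneg.mpr (pR_nonneg Γ hPSD R hRPSD u y h)
  exact psd_real_smul hX hc

lemma smul_lamR (Γ : U → Y → Mat n →ₗ[ℂ] Mat n)
    (hPSD : ∀ (u : U) (y : Y) (ω : Mat n), ω.PosSemidef → (Γ u y ω).PosSemidef)
    (R : U → Mat n → Mat n)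
    (hRPSD : ∀ (u : U) (ωh : Mat n), ωh.PosSemidef → (R u ωh).PosSemidef)
    (u : U) (y : Y) {ωh : Mat n} (h : ωh.PosSemidef) :
    Γ u y (R u ωh) = pR Γ R u y ωh • lamR Γ R u y ωh := by
  by_cases hp : pR Γ R u y ωh = 0
  · rw [hp, zero_smul]
    have hX : (Γ u y (R u ωh)).PosSemidef := hPSD u y _ (hRPSD u ωh h)
    by_cases hd : trR (R u ωh) = 0
    · have : R u ωh = 0 := (trR_psd (hRPSD u ωh h)).2 hd
      rw [this, map_zero]
    · have hnum : trR (Γ u y (R u ωh)) = 0 := by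
        rcases div_eq_zero_iff.mp hp with h1 | h1
        · exact h1
        · exact absurd h1 hd
      exact (trR_psd hX).2 hnum
  · unfold lamR
    rw [smul_smul, mul_inv_cancel₀ hp, one_smul]

lemma Gcost_smul (Γ : U → Y → Mat n →ₗ[ℂ] Mat n)
    (R : U → Mat n → Mat n)
    (hRhom : ∀ (u : U) (r : ℝ) (ωh : Mat n), R u (r • ωh) = r • R u ωh)
    (F : Mat n) (K : List Y → U) (r : ℝ) :
    ∀ (ys : List Y) (rec : List Y) (ωh : Mat n),
      Gcost Γ R F K rec (r • ωh) ys = r * Gcost Γ R F K rec ωh ys := by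
  intro ys
  induction ys with
  | nil =>
      intro rec ωh
      show trR (F * (r • ωh)) = r * trR (F * ωh)
      rw [Matrix.mul_smul, trR_smul]
  | cons y ys ih =>
      intro rec ωh
      show Gcost Γ R F K (rec ++ [y]) (Γ (K rec) y (R (K rec) (r • ωh))) ys = _
      rw [hRhom, LinearMap.map_smul_of_tower, ih]
      rfl

lemma sum_ofFn_succ [Fintype Y] {m : ℕ} (g : List Y → ℝ) :
    ∑ ys : Fin (m+1) → Y, g (List.ofFn ys)
      = ∑ y : Y, ∑ ys : Fin m → Y, g (y :: List.ofFn ys) := by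
  calc ∑ ys : Fin (m+1) → Y, g (List.ofFn ys)
      = ∑ p : Y × (Fin m → Y), g (p.1 :: List.ofFn p.2) := by
        refine (Fintype.sum_equiv (Fin.consEquiv fun _ => Y) _ _ fun p => ?_).symm
        congr 1
        rw [List.ofFn_succ]
        simp [Fin.consEquiv]
    _ = ∑ y : Y, ∑ ys : Fin m → Y, g (y :: List.ofFn ys) := Fintype.sum_prod_type _

lemma sepEvolveR_snoc (Γ : U → Y → Mat n →ₗ[ℂ] Mat n)
    (R : U → Mat n → Mat n) (ustar : Mat n → ℕ → U) :
    ∀ (l : List Y) (ω : Mat n) (k : ℕ) (y : Y),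
      sepEvolveR Γ R ustar ω k (l ++ [y])
        = lamR Γ R (ustar (sepEvolveR Γ R ustar ω k l) (k + l.length)) y
            (sepEvolveR Γ R ustar ω k l) := by
  intro l
  induction l with
  | nil => intro ω k y; simp [sepEvolveR]
  | cons a l ih =>
      intro ω k y
      show sepEvolveR Γ R ustar (lamR Γ R (ustar ω k) a ω) (k+1) (l ++ [y]) = _
      rw [ih]
      show _ = lamR Γ R (ustar (sepEvolveR Γ R ustar (lamR Γ R (ustar ω k) a ω) (k+1) l)
        (k + (a :: l).length)) y (sepEvolveR Γ R ustar (lamR Γ R (ustar ω k) a ω) (k+1) l)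
      rw [show k + (a :: l).length = k + 1 + l.length by simp; omega]

end Aux

lemma value_le_cost {n : ℕ} {U Y : Type*} [Fintype U] [Nonempty U] [Fintype Y]
    (Γ : U → Y → Mat n →ₗ[ℂ] Mat n)
    (hPSD : ∀ (u : U) (y : Y) (ω : Mat n), ω.PosSemidef → (Γ u y ω).PosSemidef)
    (R : U → Mat n → Mat n)
    (hRPSD : ∀ (u : U) (ωh : Mat n), ωh.PosSemidef → (R u ωh).PosSemidef)
    (hRhom : ∀ (u : U) (r : ℝ) (ωh : Mat n), R u (r • ωh) = r • R u ωh)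
    (F : Mat n) (M : ℕ) (W : Mat n → ℕ → ℝ)
    (hWM : ∀ ωh : Mat n, W ωh M = trR (F * ωh))
    (hWk : ∀ k < M, ∀ ωh : Mat n, ωh.PosSemidef →
      W ωh k = ⨅ u : U, ∑ y : Y, W (lamR Γ R u y ωh) (k + 1) * pR Γ R u y ωh) :
    ∀ (m k : ℕ), k + m = M → ∀ (K : List Y → U) (rec : List Y) (ωh : Mat n),
      ωh.PosSemidef →
      W ωh k ≤ ∑ ys : Fin m → Y, Gcost Γ R F K rec ωh (List.ofFn ys) := by
  intro m
  induction m with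
  | zero =>
      intro k hk K rec ωh hpsd
      have hkM : k = M := by omega
      subst hkM
      rw [hWM]
      rw [Fintype.sum_unique (fun ys : Fin 0 → Y => Gcost Γ R F K rec ωh (List.ofFn ys))]
      simp [Gcost]
  | succ m ih =>
      intro k hk K rec ωh hpsd
      have hkM : k < M := by omega
      rw [sum_ofFn_succ]
      have hstep : ∀ y : Y, ∑ ys : Fin m → Y, Gcost Γ R F K rec ωh (y :: List.ofFn ys)
          = pR Γ R (K rec) y ωh *
            ∑ ys : Fin m → Y,
              Gcost Γ R F K (rec ++ [y]) (lamR Γ R (K rec) y ωh) (List.ofFn ys) := by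
        intro y
        rw [Finset.mul_sum]
        refine Finset.sum_congr rfl fun ys _ => ?_
        show Gcost Γ R F K (rec ++ [y]) (Γ (K rec) y (R (K rec) ωh)) (List.ofFn ys) = _
        rw [smul_lamR Γ hPSD R hRPSD (K rec) y hpsd,
          Gcost_smul Γ R hRhom F K _ (List.ofFn ys)]
      calc W ωh k
          = ⨅ u : U, ∑ y : Y, W (lamR Γ R u y ωh) (k + 1) * pR Γ R u y ωh :=
            hWk k hkM ωh hpsd
        _ ≤ ∑ y : Y, W (lamR Γ R (K rec) y ωh) (k + 1) * pR Γ R (K rec) y ωh :=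
            ciInf_le (Finite.bddBelow_range _) (K rec)
        _ ≤ ∑ y : Y,
            (∑ ys : Fin m → Y,
              Gcost Γ R F K (rec ++ [y]) (lamR Γ R (K rec) y ωh) (List.ofFn ys))
              * pR Γ R (K rec) y ωh := by
            refine Finset.sum_le_sum fun y _ => ?_
            exact mul_le_mul_of_nonneg_right
              (ih (k + 1) (by omega) K (rec ++ [y]) _
                (lamR_psd Γ hPSD R hRPSD (K rec) y hpsd))
              (pR_nonneg Γ hPSD R hRPSD (K rec) y hpsd)
        _ = ∑ y : Y, ∑ ys : Fin m → Y, Gcost Γ R F K rec ωh (y :: List.ofFn ys) := by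
            refine Finset.sum_congr rfl fun y _ => ?_
            rw [hstep y, mul_comm]

lemma sep_cost_eq_value {n : ℕ} {U Y : Type*} [Fintype U] [Nonempty U] [Fintype Y]
    (Γ : U → Y → Mat n →ₗ[ℂ] Mat n)
    (hPSD : ∀ (u : U) (y : Y) (ω : Mat n), ω.PosSemidef → (Γ u y ω).PosSemidef)
    (R : U → Mat n → Mat n)
    (hRPSD : ∀ (u : U) (ωh : Mat n), ωh.PosSemidef → (R u ωh).PosSemidef)
    (hRhom : ∀ (u : U) (r : ℝ) (ωh : Mat n), R u (r • ωh) = r • R u ωh)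
    (F : Mat n) (M : ℕ) (W : Mat n → ℕ → ℝ)
    (hWM : ∀ ωh : Mat n, W ωh M = trR (F * ωh))
    (ustar : Mat n → ℕ → U)
    (hustar : ∀ k < M, ∀ ωh : Mat n, ωh.PosSemidef →
      (∑ y : Y, W (lamR Γ R (ustar ωh k) y ωh) (k + 1) * pR Γ R (ustar ωh k) y ωh)
        = W ωh k)
    (ωh₀ : Mat n) :
    ∀ (m k : ℕ), k + m = M → ∀ (rec : List Y) (ωh : Mat n), ωh.PosSemidef →
      sepEvolveR Γ R ustar ωh₀ 0 rec = ωh → rec.length = k →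
      (∑ ys : Fin m → Y,
        Gcost Γ R F (sepControllerR Γ R ustar ωh₀) rec ωh (List.ofFn ys)) = W ωh k := by
  intro m
  induction m with
  | zero =>
      intro k hk rec ωh hpsd _ _
      have hkM : k = M := by omega
      subst hkM
      rw [hWM]
      rw [Fintype.sum_unique (fun ys : Fin 0 → Y =>
        Gcost Γ R F (sepControllerR Γ R ustar ωh₀) rec ωh (List.ofFn ys))]
      simp [Gcost]
  | succ m ih =>
      intro k hk rec ωh hpsd hevol hlen
      have hkM : k < M := by omega
      set K := sepControllerR Γ R ustar ωh₀ with hK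
      have hKrec : K rec = ustar ωh k := by
        rw [hK]; unfold sepControllerR; rw [hevol, hlen]
      rw [sum_ofFn_succ]
      have hterm : ∀ y : Y,
          ∑ ys : Fin m → Y, Gcost Γ R F K rec ωh (y :: List.ofFn ys)
            = W (lamR Γ R (ustar ωh k) y ωh) (k + 1) * pR Γ R (ustar ωh k) y ωh := by
        intro y
        have hinner :
            ∑ ys : Fin m → Y,
              Gcost Γ R F K (rec ++ [y]) (lamR Γ R (ustar ωh k) y ωh) (List.ofFn ys)
                = W (lamR Γ R (ustar ωh k) y ωh) (k + 1) := by
          refine ih (k + 1) (by omega) (rec ++ [y]) _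
            (lamR_psd Γ hPSD R hRPSD (ustar ωh k) y hpsd) ?_ ?_
          · rw [sepEvolveR_snoc Γ R ustar rec ωh₀ 0 y, hevol, Nat.zero_add, hlen]
          · simp [hlen]
        calc ∑ ys : Fin m → Y, Gcost Γ R F K rec ωh (y :: List.ofFn ys)
            = ∑ ys : Fin m → Y,
                Gcost Γ R F K (rec ++ [y]) (Γ (K rec) y (R (K rec) ωh)) (List.ofFn ys) :=
              rfl
          _ = pR Γ R (ustar ωh k) y ωh *
              ∑ ys : Fin m → Y,
                Gcost Γ R F K (rec ++ [y]) (lamR Γ R (ustar ωh k) y ωh) (List.ofFn ys) := by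
              rw [Finset.mul_sum]
              refine Finset.sum_congr rfl fun ys _ => ?_
              rw [hKrec, smul_lamR Γ hPSD R hRPSD (ustar ωh k) y hpsd,
                Gcost_smul Γ R hRhom F K _ (List.ofFn ys)]
          _ = W (lamR Γ R (ustar ωh k) y ωh) (k + 1) * pR Γ R (ustar ωh k) y ωh := by
              rw [hinner, mul_comm]
      calc ∑ y : Y, ∑ ys : Fin m → Y, Gcost Γ R F K rec ωh (y :: List.ofFn ys)
          = ∑ y : Y, W (lamR Γ R (ustar ωh k) y ωh) (k + 1) * pR Γ R (ustar ωh k) y ωh :=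
            Finset.sum_congr rfl fun y _ => hterm y
        _ = W ωh k := hustar k hkM ωh hpsd

/-- Theorem 1(ii): optimality of the risk-sensitive separation
controller.  If `W` satisfies the dynamic programming equation and `ustar` attains the
infimum, then the separation controller achieves `J^μ_{ωh₀,0}(K̂*) = W(ωh₀,0)` and is
optimal. -/
theorem riskSensitive_separation_optimal
    {n : ℕ} {U Y : Type*} [Fintype U] [Nonempty U] [Fintype Y] [Nonempty Y]
    (Γ : U → Y → Mat n →ₗ[ℂ] Mat n)
    (hPSD : ∀ (u : U) (y : Y) (ω : Mat n), ω.PosSemidef → (Γ u y ω).PosSemidef)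
    (hNorm : ∀ (u : U) (ω : Mat n), ∑ y : Y, (Γ u y ω).trace = ω.trace)
    (R : U → Mat n → Mat n)
    (hRPSD : ∀ (u : U) (ωh : Mat n), ωh.PosSemidef → (R u ωh).PosSemidef)
    (hRhom : ∀ (u : U) (r : ℝ) (ωh : Mat n), R u (r • ωh) = r • R u ωh)
    (F : Mat n) (hF : F.IsHermitian)
    (M : ℕ) (hM : 1 ≤ M)
    (W : Mat n → ℕ → ℝ)
    (hWM : ∀ ωh : Mat n, W ωh M = trR (F * ωh))
    (hWk : ∀ k < M, ∀ ωh : Mat n, ωh.PosSemidef →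
      W ωh k = ⨅ u : U, ∑ y : Y, W (lamR Γ R u y ωh) (k + 1) * pR Γ R u y ωh)
    (ustar : Mat n → ℕ → U)
    (hustar : ∀ k < M, ∀ ωh : Mat n, ωh.PosSemidef →
      (∑ y : Y, W (lamR Γ R (ustar ωh k) y ωh) (k + 1) * pR Γ R (ustar ωh k) y ωh)
        = W ωh k)
    (ωh₀ : Mat n) (hωh₀ : ωh₀.PosSemidef) :
    (∑ ys : Fin M → Y,
        Gcost Γ R F (sepControllerR Γ R ustar ωh₀) [] ωh₀ (List.ofFn ys)) = W ωh₀ 0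
    ∧ ∀ K : List Y → U,
        (∑ ys : Fin M → Y,
            Gcost Γ R F (sepControllerR Γ R ustar ωh₀) [] ωh₀ (List.ofFn ys))
          ≤ ∑ ys : Fin M → Y, Gcost Γ R F K [] ωh₀ (List.ofFn ys) := by
  have heq := sep_cost_eq_value Γ hPSD R hRPSD hRhom F M W hWM ustar hustar ωh₀
    M 0 (by omega) [] ωh₀ hωh₀ rfl rfl
  refine ⟨heq, fun K => ?_⟩
  rw [heq]
  exact value_le_cost Γ hPSD R hRPSD hRhom F M W hWM hWk M 0 (by omega) K [] ωh₀ hωh₀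
end
end

section
/- (Robustness bound for the risk-sensitive criterion.) Let Ω be a finite nonempty set, and let P, Q : Ω → ℝ be probability mass functions (nonnegative, summing to 1) such that Q(x) > 0 implies P(x) > 0. Define the relative entropy RE(Q‖P) = ∑_{x : Q(x)>0} Q(x) log(Q(x)/P(x)). Let μ > 0 and γ² = 1/μ. Let M ≥ 1, let L(u) (u ∈ U) and N be positive semidefinite Hermitian n×n matrices, and let u_k : Ω → U (0 ≤ k ≤ M−1) and ω_k : Ω → {density matrices} (0 ≤ k ≤ M) be arbitrary functions. Then ∑_{x∈Ω} Q(x) · (∑_{k=0}^{M−1} tr(L(u_k(x)) ω_k(x)) + tr(N ω_M(x))) ≤ γ² · log( ∑_{x∈Ω} P(x) · ∏_{k=0}^{M−1} tr(exp(μ L(u_k(x))) ω_k(x)) · tr(exp(μ N) ω_M(x)) ) + γ² · RE(Q‖P). -/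
open Matrix BigOperators
open scoped ComplexOrder

noncomputable section

/-- The matrix exponential. -/
def expM {n : ℕ} (A : Mat n) : Mat n := NormedSpace.exp A

/-- Relative entropy `RE(Q‖P) = ∑_{x : Q(x) > 0} Q(x) log(Q(x)/P(x))` of probability
mass functions on a finite type. -/
def relEnt {Ω : Type*} [Fintype Ω] (Q P : Ω → ℝ) : ℝ :=
  ∑ x ∈ Finset.univ.filter (fun x => 0 < Q x), Q x * Real.log (Q x / P x)

/-- Peierls–Bogoliubov type inequality: for Hermitian `A` and a density matrix `ω`,
`exp(tr(Aω)) ≤ tr(exp(A) ω)` (real parts). -/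
lemma peierls {n : ℕ} {A ω : Mat n} (hA : A.IsHermitian) (hω : ω.PosSemidef)
    (htr : ω.trace = 1) : Real.exp (trR (A * ω)) ≤ trR (expM A * ω) := by
  classical
  set V : Mat n := (hA.eigenvectorUnitary : Mat n) with hV
  have hVmem := (hA.eigenvectorUnitary).2
  have hVs : V * star V = 1 := (Matrix.mem_unitaryGroup_iff).mp hVmem
  have hsV : star V * V = 1 := (Matrix.mem_unitaryGroup_iff').mp hVmem
  set lam : Fin n → ℝ := hA.eigenvalues with hlam
  set S : Mat n := star V * ω * V with hS
  have hSpsd : S.PosSemidef := by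
    exact hω.conjTranspose_mul_mul_same V
  set p : Fin n → ℝ := fun i => (S i i).re with hp
  have hp0 : ∀ i, 0 ≤ p i := by
    intro i
    have := hSpsd.re_dotProduct_nonneg (Pi.single i 1)
    simpa [dotProduct, Matrix.mulVec, Pi.single_apply, Finset.sum_ite_eq,
      Finset.mul_sum] using this
  have hp1 : ∑ i, p i = 1 := by
    have : S.trace = ω.trace := by
      rw [hS, Matrix.trace_mul_cycle]
      rw [hVs, one_mul]
    have := congrArg Complex.re (this.trans htr)
    simpa [Matrix.trace, Matrix.diag, Complex.re_sum, p] using this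
  -- trace identity for conjugated diagonal
  have key : ∀ d : Fin n → ℂ, ((V * Matrix.diagonal d * star V) * ω).trace
      = ∑ i, d i * S i i := by
    intro d
    have : ((V * Matrix.diagonal d * star V) * ω).trace
        = (Matrix.diagonal d * S).trace := by
      rw [hS]
      calc ((V * Matrix.diagonal d * star V) * ω).trace
          = ((V * Matrix.diagonal d) * (star V * ω)).trace := by rw [mul_assoc]
        _ = ((star V * ω) * (V * Matrix.diagonal d)).trace := Matrix.trace_mul_comm _ _
        _ = ((star V * ω * V) * Matrix.diagonal d).trace := by
            rw [← mul_assoc]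
        _ = (Matrix.diagonal d * (star V * ω * V)).trace := Matrix.trace_mul_comm _ _
    rw [this]
    simp [Matrix.trace, Matrix.diag, Matrix.diagonal_mul]
  have hAeq : A = V * Matrix.diagonal (fun i => (lam i : ℂ)) * star V := by
    have := hA.spectral_theorem
    exact this
  have hExp : expM A = V * Matrix.diagonal (fun i => (Real.exp (lam i) : ℂ)) * star V := by
    have hVinv : V⁻¹ = star V := Matrix.inv_eq_left_inv hsV
    have hUnit : IsUnit V := by
      refine (Matrix.isUnit_iff_isUnit_det V).mpr ?_
      exact Matrix.isUnit_det_of_left_inverse hsV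
    have hfun : (NormedSpace.exp fun i : Fin n => ((lam i : ℝ) : ℂ))
        = fun i : Fin n => ((Real.exp (lam i) : ℝ) : ℂ) := by
      funext i
      rw [Pi.exp_def, ← Complex.exp_eq_exp_ℂ, Complex.ofReal_exp]
    rw [expM, hAeq, ← hVinv, Matrix.exp_conj V _ hUnit, Matrix.exp_diagonal, hfun]
  have htrA : trR (A * ω) = ∑ i, lam i * p i := by
    rw [trR, hAeq, key]
    simp [Complex.re_sum, p]
  have htrE : trR (expM A * ω) = ∑ i, Real.exp (lam i) * p i := by
    rw [trR, hExp, key]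
    simp [Complex.re_sum, p, Complex.exp_ofReal_re]
  rw [htrA, htrE]
  have jensen := convexOn_exp.map_sum_le (t := Finset.univ) (w := p)
      (p := lam) (fun i _ => hp0 i) hp1 (fun i _ => Set.mem_univ _)
  calc Real.exp (∑ i, lam i * p i)
      = Real.exp (∑ i, p i • lam i) := by
        congr 1; exact Finset.sum_congr rfl fun i _ => by simp [mul_comm]
    _ ≤ ∑ i, p i • Real.exp (lam i) := jensen
    _ = ∑ i, Real.exp (lam i) * p i := Finset.sum_congr rfl fun i _ => by
        simp [mul_comm]

/-- Donsker–Varadhan type bound. -/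
lemma dv_bound {Ω : Type*} [Fintype Ω] (P Q : Ω → ℝ)
    (hP0 : ∀ x, 0 ≤ P x)
    (hQ0 : ∀ x, 0 ≤ Q x) (hQ1 : ∑ x : Ω, Q x = 1)
    (hac : ∀ x, 0 < Q x → 0 < P x)
    (μ : ℝ) (hμ : 0 < μ) (f g : Ω → ℝ)
    (hfg : ∀ x, Real.exp (μ * f x) ≤ g x) :
    ∑ x : Ω, Q x * f x
      ≤ μ⁻¹ * Real.log (∑ x : Ω, P x * g x) + μ⁻¹ * relEnt Q P := by
  classical
  set T := Finset.univ.filter (fun x => 0 < Q x) with hT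
  have hmemT : ∀ x ∈ T, 0 < Q x := fun x hx => (Finset.mem_filter.mp hx).2
  have hzero : ∀ x ∈ Finset.univ \ T, Q x = 0 := by
    intro x hx
    rcases Finset.mem_sdiff.mp hx with ⟨_, hx2⟩
    have : ¬ 0 < Q x := fun h => hx2 (Finset.mem_filter.mpr ⟨Finset.mem_univ _, h⟩)
    linarith [hQ0 x]
  have hsum_restrict : ∀ h : Ω → ℝ, ∑ x : Ω, Q x * h x = ∑ x ∈ T, Q x * h x := by
    intro h
    rw [← Finset.sum_subset (Finset.subset_univ T)]
    intro x _ hx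
    have : Q x = 0 := hzero x (Finset.mem_sdiff.mpr ⟨Finset.mem_univ _, hx⟩)
    simp [this]
  have hQT : ∑ x ∈ T, Q x = 1 := by
    have h := hsum_restrict (fun _ => 1)
    simp only [mul_one] at h
    rw [← h, hQ1]
  set t : Ω → ℝ := fun x => P x * Real.exp (μ * f x) / Q x with ht
  have htpos : ∀ x ∈ T, 0 < t x :=
    fun x hx => div_pos (mul_pos (hac x (hmemT x hx)) (Real.exp_pos _)) (hmemT x hx)
  have step1 : μ * (∑ x : Ω, Q x * f x) - relEnt Q P = ∑ x ∈ T, Q x * Real.log (t x) := by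
    rw [hsum_restrict f, relEnt, ← hT, Finset.mul_sum, ← Finset.sum_sub_distrib]
    refine Finset.sum_congr rfl fun x hx => ?_
    have hQx := hmemT x hx
    have hPx := hac x hQx
    rw [ht]
    rw [Real.log_div (by positivity) (ne_of_gt hQx), Real.log_mul (ne_of_gt hPx)
      (ne_of_gt (Real.exp_pos _)), Real.log_exp, Real.log_div (ne_of_gt hQx) (ne_of_gt hPx)]
    ring
  have step2 : ∑ x ∈ T, Q x * Real.log (t x) ≤ Real.log (∑ x ∈ T, Q x * t x) := by
    have := (StrictConcaveOn.concaveOn strictConcaveOn_log_Ioi).le_map_sum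
      (t := T) (w := Q) (p := t) (fun x hx => hQ0 x) hQT
      (fun x hx => htpos x hx)
    simpa [smul_eq_mul] using this
  have step3 : ∑ x ∈ T, Q x * t x = ∑ x ∈ T, P x * Real.exp (μ * f x) := by
    refine Finset.sum_congr rfl fun x hx => ?_
    rw [ht, mul_div_assoc', mul_comm, mul_div_assoc, div_self (ne_of_gt (hmemT x hx)), mul_one]
  have hTne : T.Nonempty := by
    by_contra h
    rw [Finset.not_nonempty_iff_eq_empty] at h
    rw [h] at hQT
    simp at hQT
  have hposS : 0 < ∑ x ∈ T, P x * Real.exp (μ * f x) :=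
    Finset.sum_pos (fun x hx => mul_pos (hac x (hmemT x hx)) (Real.exp_pos _)) hTne
  have step4 : ∑ x ∈ T, P x * Real.exp (μ * f x) ≤ ∑ x : Ω, P x * g x := by
    calc ∑ x ∈ T, P x * Real.exp (μ * f x)
        ≤ ∑ x ∈ T, P x * g x :=
          Finset.sum_le_sum fun x hx => mul_le_mul_of_nonneg_left (hfg x) (hP0 x)
      _ ≤ ∑ x : Ω, P x * g x := by
          refine Finset.sum_le_sum_of_subset_of_nonneg (Finset.subset_univ T) ?_
          intro x _ _
          exact mul_nonneg (hP0 x) ((Real.exp_pos _).le.trans (hfg x))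
  have hlog : Real.log (∑ x ∈ T, P x * Real.exp (μ * f x)) ≤ Real.log (∑ x : Ω, P x * g x) :=
    Real.log_le_log hposS step4
  have main : μ * (∑ x : Ω, Q x * f x) ≤ Real.log (∑ x : Ω, P x * g x) + relEnt Q P := by
    have := step1.le.trans (step2.trans
      (by rw [step3] : Real.log (∑ x ∈ T, Q x * t x) ≤ _))
    linarith
  have h2 := mul_le_mul_of_nonneg_left main (le_of_lt (inv_pos.mpr hμ))
  rw [← mul_assoc, inv_mul_cancel₀ (ne_of_gt hμ), one_mul, mul_add] at h2
  exact h2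

lemma trR_smul_mul {n : ℕ} (μ : ℝ) (A ω : Mat n) :
    trR ((μ • A) * ω) = μ * trR (A * ω) := by
  rw [trR, trR, Matrix.smul_mul, Matrix.trace_smul]
  simp [Complex.real_smul, Complex.mul_re]

lemma isHermitian_real_smul {n : ℕ} (μ : ℝ) {A : Mat n} (hA : A.IsHermitian) :
    (μ • A).IsHermitian := by
  rw [Matrix.IsHermitian, Matrix.conjTranspose_smul]
  rw [hA.eq]
  simp

/-- Per-state Peierls inequality in the scaled form. -/
lemma peierls_scaled {n : ℕ} (μ : ℝ) {A ω : Mat n} (hA : A.IsHermitian)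
    (hω : ω.PosSemidef) (htr : ω.trace = 1) :
    Real.exp (μ * trR (A * ω)) ≤ trR (expM (μ • A) * ω) := by
  have := peierls (isHermitian_real_smul μ hA) hω htr
  rwa [trR_smul_mul] at this

/-- robustness bound for the risk-sensitive criterion: the `Q`-average
risk-neutral cost is bounded by `γ² log` of the `P`-average risk-sensitive cost plus
`γ² RE(Q‖P)`, where `γ² = 1/μ`. -/
theorem risk_sensitive_robustness_bound
    {n : ℕ} {Ω : Type*} [Fintype Ω] [Nonempty Ω]
    {U : Type*} [Fintype U] [Nonempty U]
    (P Q : Ω → ℝ)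
    (hP0 : ∀ x, 0 ≤ P x) (hP1 : ∑ x : Ω, P x = 1)
    (hQ0 : ∀ x, 0 ≤ Q x) (hQ1 : ∑ x : Ω, Q x = 1)
    (hac : ∀ x, 0 < Q x → 0 < P x)
    (μ : ℝ) (hμ : 0 < μ)
    (M : ℕ) (hM : 1 ≤ M)
    (L : U → Mat n) (hL : ∀ u, (L u).PosSemidef)
    (N : Mat n) (hN : N.PosSemidef)
    (u : ℕ → Ω → U) (ω : ℕ → Ω → Mat n)
    (hω : ∀ k ≤ M, ∀ x, (ω k x).PosSemidef ∧ (ω k x).trace = 1) :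
    ∑ x : Ω, Q x *
        ((∑ k ∈ Finset.range M, trR (L (u k x) * ω k x)) + trR (N * ω M x))
      ≤ μ⁻¹ * Real.log (∑ x : Ω, P x *
            ((∏ k ∈ Finset.range M, trR (expM (μ • L (u k x)) * ω k x))
              * trR (expM (μ • N) * ω M x)))
        + μ⁻¹ * relEnt Q P := by
  refine dv_bound P Q hP0 hQ0 hQ1 hac μ hμ _ _ ?_
  intro x
  have hprod : ∀ k ∈ Finset.range M,
      Real.exp (μ * trR (L (u k x) * ω k x)) ≤ trR (expM (μ • L (u k x)) * ω k x) := by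
    intro k hk
    have hk' : k ≤ M := le_of_lt (Finset.mem_range.mp hk)
    exact peierls_scaled μ (hL (u k x)).isHermitian (hω k hk' x).1 (hω k hk' x).2
  have hlast : Real.exp (μ * trR (N * ω M x)) ≤ trR (expM (μ • N) * ω M x) :=
    peierls_scaled μ hN.isHermitian (hω M le_rfl x).1 (hω M le_rfl x).2
  calc Real.exp (μ * ((∑ k ∈ Finset.range M, trR (L (u k x) * ω k x)) + trR (N * ω M x)))
      = (∏ k ∈ Finset.range M, Real.exp (μ * trR (L (u k x) * ω k x)))
          * Real.exp (μ * trR (N * ω M x)) := by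
        rw [mul_add, Real.exp_add, Finset.mul_sum, Real.exp_sum]
    _ ≤ (∏ k ∈ Finset.range M, trR (expM (μ • L (u k x)) * ω k x))
          * trR (expM (μ • N) * ω M x) := by
        refine mul_le_mul ?_ hlast (Real.exp_pos _).le ?_
        · exact Finset.prod_le_prod (fun k _ => (Real.exp_pos _).le) hprod
        · exact Finset.prod_nonneg fun k hk =>
            (Real.exp_pos _).le.trans (hprod k hk)
end
end
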